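/- Let x ∈ M(n) satisfy the eigenvalue disjointness condition and let m ∈ {1,...,n−1}. Let v ∈ ℂ^m be the vector whose i-th entry is the (i, m+1) entry of x, for i = 1,...,m. Then the m vectors (x_m)^j v, for j = 0, 1, ..., m−1, form a basis of ℂ^m; that is, v is a cyclic vector for the matrix x_m acting on ℂ^m. -/

import Mathlib

open Matrix Polynomial

noncomputable section

attribute [local instance] Matrix.normedAddCommGroup Matrix.normedSpace

def d (k : ℕ) : ℕ := k * (k + 1) / 2

def cutoff {n : ℕ} (x : Matrix (Fin n) (Fin n) ℂ) {m : ℕ} (h : m ≤ n) :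
    Matrix (Fin m) (Fin m) ℂ :=
  Matrix.of fun i j => x (Fin.castLE h i) (Fin.castLE h j)

def Phi (n : ℕ) (x : Matrix (Fin n) (Fin n) ℂ) : (Σ m : Fin n, Fin (m.1 + 1)) → ℂ :=
  fun p => (-1 : ℂ) ^ (p.1.1 - p.2.1 + 1) * ((cutoff x p.1.2).charpoly.coeff p.2.1)

def StronglyRegular {n : ℕ} (x : Matrix (Fin n) (Fin n) ℂ) : Prop :=
  Function.Surjective (fderiv ℂ (Phi n) x)

def InEB {n : ℕ} (x : Matrix (Fin n) (Fin n) ℂ) : Prop :=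
  (∀ i j : Fin n, i.1 = j.1 + 1 → x i j = -1) ∧
  (∀ i j : Fin n, j.1 + 1 < i.1 → x i j = 0)

def EigDisjoint {n : ℕ} (x : Matrix (Fin n) (Fin n) ℂ) : Prop :=
  (∀ (m : ℕ) (_ : 1 ≤ m) (hm : m ≤ n), (cutoff x hm).charpoly.roots.toFinset.card = m) ∧
  (∀ (m : ℕ) (_ : 1 ≤ m) (hm : m + 1 ≤ n) (z : ℂ),
    ¬((cutoff x (Nat.le_of_succ_le hm)).charpoly.IsRoot z ∧
      (cutoff x hm).charpoly.IsRoot z))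

def embed {n m : ℕ} (h : m ≤ n) (y : Matrix (Fin m) (Fin m) ℂ) :
    Matrix (Fin n) (Fin n) ℂ :=
  Matrix.of fun i j =>
    if hi : i.1 < m then if hj : j.1 < m then y ⟨i.1, hi⟩ ⟨j.1, hj⟩ else 0 else 0

def GSet {n : ℕ} (x : Matrix (Fin n) (Fin n) ℂ) {m : ℕ} (h : m ≤ n) :
    Set (Matrix (Fin n) (Fin n) ℂ) :=
  {g | IsUnit g ∧
    (∀ i j : Fin n, m ≤ i.1 ∨ m ≤ j.1 → g i j = (1 : Matrix (Fin n) (Fin n) ℂ) i j) ∧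
    cutoff g h ∈ Submodule.span ℂ (Set.range fun k : ℕ => (cutoff x h) ^ k)}

def centSubmodule {n : ℕ} (x : Matrix (Fin n) (Fin n) ℂ) :
    Submodule ℂ (Matrix (Fin n) (Fin n) ℂ) where
  carrier := {y | x * y = y * x}
  add_mem' := fun {a b} ha hb => by
    simp only [Set.mem_setOf_eq] at *
    rw [mul_add, add_mul, ha, hb]
  zero_mem' := by simp
  smul_mem' := fun c a ha => by
    simp only [Set.mem_setOf_eq] at *
    rw [mul_smul_comm, smul_mul_assoc, ha]

def Zsub {n : ℕ} (x : Matrix (Fin n) (Fin n) ℂ) {m : ℕ} (h : m ≤ n) :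
    Submodule ℂ (Matrix (Fin n) (Fin n) ℂ) :=
  Submodule.span ℂ (Set.range fun k : ℕ => embed h ((cutoff x h) ^ k))

def IsJacobi {n : ℕ} (x : Matrix (Fin n) (Fin n) ℂ) : Prop :=
  (∀ i j : Fin n, (i.1 + 1 < j.1 ∨ j.1 + 1 < i.1) → x i j = 0) ∧
  (∀ i j : Fin n, (i.1 + 1 = j.1 ∨ j.1 + 1 = i.1) → x i j ≠ 0)

lemma charpoly_eval_eq_det {k : ℕ} (M : Matrix (Fin k) (Fin k) ℂ) (t : ℂ) :
    M.charpoly.eval t = (t • (1 : Matrix (Fin k) (Fin k) ℂ) - M).det := by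
  rw [Matrix.charpoly, ← Polynomial.coe_evalRingHom, RingHom.map_det]
  congr 1
  ext i j
  by_cases hij : i = j <;>
    simp [Matrix.charmatrix_apply, Matrix.diagonal_apply, Matrix.one_apply, hij]

lemma isRoot_of_vecMul {k : ℕ} (M : Matrix (Fin k) (Fin k) ℂ) (t : ℂ) (w : Fin k → ℂ)
    (hw : w ≠ 0) (h : M.vecMul w = t • w) : M.charpoly.IsRoot t := by
  rw [Polynomial.IsRoot, charpoly_eval_eq_det, ← Matrix.det_transpose,
    ← Matrix.exists_mulVec_eq_zero_iff]
  refine ⟨w, hw, ?_⟩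
  have h1 : (t • (1 : Matrix (Fin k) (Fin k) ℂ) - M)ᵀ = t • 1 - Mᵀ := by
    simp
  rw [h1, Matrix.sub_mulVec, Matrix.smul_mulVec, Matrix.one_mulVec,
    Matrix.mulVec_transpose, h, sub_self]

lemma span_all (n : ℕ) (x : Matrix (Fin n) (Fin n) ℂ) (hx : EigDisjoint x)
    (m : ℕ) (hm1 : 1 ≤ m) (hm : m + 1 ≤ n) :
    Submodule.span ℂ (Set.range (fun j : Fin m =>
      ((cutoff x (Nat.le_of_succ_le hm)) ^ (j : ℕ)).mulVec
        (fun i : Fin m => x (Fin.castLE (Nat.le_of_succ_le hm) i) ⟨m, hm⟩))) = ⊤ := by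
  set h : m ≤ n := Nat.le_of_succ_le hm with hhdef
  set A : Matrix (Fin m) (Fin m) ℂ := cutoff x h with hA
  set v : Fin m → ℂ := fun i : Fin m => x (Fin.castLE h i) ⟨m, hm⟩ with hv
  by_contra hS
  set S : Submodule ℂ (Fin m → ℂ) :=
    Submodule.span ℂ (Set.range fun j : Fin m => (A ^ (j : ℕ)).mulVec v) with hSdef
  -- the linear map M ↦ M.mulVec v
  set L : Matrix (Fin m) (Fin m) ℂ →ₗ[ℂ] (Fin m → ℂ) :=
    { toFun := fun M => M.mulVec v
      map_add' := fun a b => Matrix.add_mulVec a b v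
      map_smul' := fun c a => Matrix.smul_mulVec c a v } with hL
  have hmem : ∀ k : ℕ, (A ^ k).mulVec v ∈ S := by
    intro k
    have hk := Matrix.pow_eq_aeval_mod_charpoly A k
    set p := (X : ℂ[X]) ^ k %ₘ A.charpoly with hp
    have hdeg : p.natDegree < m := by
      by_cases hp0 : p = 0
      · rw [hp0]; simpa using Nat.lt_of_lt_of_le Nat.zero_lt_one hm1
      · have h1 : p.degree < A.charpoly.degree :=
          Polynomial.degree_modByMonic_lt _ A.charpoly_monic
        have h2 : A.charpoly.degree = (m : ℕ) := by
          simpa using A.charpoly_degree_eq_dim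
        rw [h2] at h1
        rw [Polynomial.natDegree_lt_iff_degree_lt hp0]
        exact_mod_cast h1
    have hsum : A ^ k = ∑ i ∈ Finset.range m, p.coeff i • A ^ i := by
      rw [hk, Polynomial.aeval_eq_sum_range' hdeg]
    have : (A ^ k).mulVec v = ∑ i ∈ Finset.range m, p.coeff i • (A ^ i).mulVec v := by
      have := congrArg L hsum
      simpa [hL, map_sum] using this
    rw [this]
    refine Submodule.sum_mem _ fun i hi => Submodule.smul_mem _ _ ?_
    exact Submodule.subset_span ⟨⟨i, Finset.mem_range.mp hi⟩, rfl⟩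
  have hinv : ∀ u ∈ S, A.mulVec u ∈ S := by
    intro u hu
    induction hu using Submodule.span_induction with
    | mem u hu =>
      obtain ⟨j, rfl⟩ := hu
      rw [Matrix.mulVec_mulVec, ← pow_succ']
      exact hmem _
    | zero => simp [Matrix.mulVec_zero]
    | add a b _ _ ha hb => rw [Matrix.mulVec_add]; exact Submodule.add_mem _ ha hb
    | smul c a _ ha => rw [Matrix.mulVec_smul]; exact Submodule.smul_mem _ _ ha
  -- a nonzero functional vanishing on S
  obtain ⟨f, hf0, hfS⟩ :=
    Submodule.exists_dual_map_eq_bot_of_lt_top (lt_top_iff_ne_top.mpr hS) inferInstance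
  have hfS' : ∀ u ∈ S, f u = 0 := by
    intro u hu
    have : f u ∈ S.map f := Submodule.mem_map_of_mem hu
    rwa [hfS, Submodule.mem_bot] at this
  -- dual endomorphism restricted to the annihilator
  set D : Module.Dual ℂ (Fin m → ℂ) →ₗ[ℂ] Module.Dual ℂ (Fin m → ℂ) :=
    (Matrix.mulVecLin A).dualMap with hD
  have hDW : ∀ g ∈ S.dualAnnihilator, D g ∈ S.dualAnnihilator := by
    intro g hg
    rw [Submodule.mem_dualAnnihilator] at hg ⊢
    intro u hu
    exact hg _ (hinv u hu)
  have hfW : f ∈ S.dualAnnihilator := by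
    rw [Submodule.mem_dualAnnihilator]; exact hfS'
  haveI : Nontrivial S.dualAnnihilator :=
    nontrivial_of_ne ⟨f, hfW⟩ 0 (by simpa [Subtype.ext_iff] using hf0)
  set E : Module.End ℂ S.dualAnnihilator := D.restrict hDW with hE
  obtain ⟨μ, hμ⟩ := Module.End.exists_eigenvalue E
  obtain ⟨g0, hg0⟩ := hμ.exists_hasEigenvector
  set g : Module.Dual ℂ (Fin m → ℂ) := (g0 : Module.Dual ℂ (Fin m → ℂ)) with hg
  have hgS : ∀ u ∈ S, g u = 0 := by
    have := g0.2
    rw [Submodule.mem_dualAnnihilator] at this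
    exact this
  have hgD : D g = μ • g := by
    have h1 : E g0 = μ • g0 := Module.End.mem_eigenspace_iff.mp hg0.1
    have := congrArg (Subtype.val) h1
    simpa [hE, LinearMap.restrict_apply] using this
  have hgne : g ≠ 0 := by
    intro hc
    exact hg0.2 (Subtype.ext hc)
  set w : Fin m → ℂ := fun i => g (Pi.single i 1) with hw
  have hgw : ∀ u : Fin m → ℂ, g u = ∑ i, u i * w i := by
    intro u
    have hu : u = ∑ i, u i • (Pi.single i 1 : Fin m → ℂ) := by
      funext j
      simp [Finset.sum_apply, Pi.single_apply, Finset.sum_ite_eq']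
    calc g u = g (∑ i, u i • (Pi.single i 1 : Fin m → ℂ)) := by rw [← hu]
      _ = ∑ i, u i * w i := by
          rw [map_sum]
          refine Finset.sum_congr rfl fun i _ => ?_
          rw [_root_.map_smul, smul_eq_mul]
  have hw0 : w ≠ 0 := by
    intro hc
    apply hgne
    apply LinearMap.ext
    intro u
    rw [hgw u, hc]
    simp
  have hAw : A.vecMul w = μ • w := by
    funext j
    have h1 : (D g) (Pi.single j 1) = μ * w j := by
      rw [hgD]; simp [hw]
    have h2 : (D g) (Pi.single j 1) = g (A.mulVec (Pi.single j 1)) := rfl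
    have h3 : A.mulVec (Pi.single j 1) = fun i => A i j := by
      funext i
      simp [Matrix.mulVec_single]
    rw [h2, h3, hgw] at h1
    simp only [Matrix.vecMul, dotProduct, Pi.smul_apply, smul_eq_mul]
    rw [← h1]
    exact Finset.sum_congr rfl fun i _ => mul_comm _ _
  have hvS : v ∈ S := by
    have := hmem 0
    simpa using this
  have hwv : ∑ i, v i * w i = 0 := by
    rw [← hgw]; exact hgS v hvS
  -- build left eigenvector of the (m+1)-cutoff
  set B : Matrix (Fin (m + 1)) (Fin (m + 1)) ℂ := cutoff x hm with hB
  set w' : Fin (m + 1) → ℂ := Fin.snoc w 0 with hw'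
  have hw'0 : w' ≠ 0 := by
    intro hc
    apply hw0
    funext i
    have := congrFun hc (Fin.castSucc i)
    simpa [hw', Fin.snoc_castSucc] using this
  have hBA : ∀ i j : Fin m, B (Fin.castSucc i) (Fin.castSucc j) = A i j := by
    intro i j
    show x (Fin.castLE hm (Fin.castSucc i)) (Fin.castLE hm (Fin.castSucc j))
      = x (Fin.castLE h i) (Fin.castLE h j)
    congr 1 <;> exact Fin.ext rfl
  have hBv : ∀ i : Fin m, B (Fin.castSucc i) (Fin.last m) = v i := by
    intro i
    show x (Fin.castLE hm (Fin.castSucc i)) (Fin.castLE hm (Fin.last m)) = x (Fin.castLE h i) ⟨m, hm⟩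
    congr 1 <;> exact Fin.ext rfl
  have hBw' : B.vecMul w' = μ • w' := by
    funext j
    have hsum : (B.vecMul w') j = ∑ i : Fin m, w i * B (Fin.castSucc i) j := by
      simp only [Matrix.vecMul, dotProduct]
      rw [Fin.sum_univ_castSucc]
      simp [hw', Fin.snoc_castSucc, Fin.snoc_last]
    induction j using Fin.lastCases with
    | last =>
      rw [hsum]
      have : ∑ i : Fin m, w i * B (Fin.castSucc i) (Fin.last m) = ∑ i, v i * w i := by
        refine Finset.sum_congr rfl fun i _ => ?_
        rw [hBv i, mul_comm]
      rw [this, hwv]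
      simp [hw', Fin.snoc_last]
    | cast j =>
      rw [hsum]
      have : ∑ i : Fin m, w i * B (Fin.castSucc i) (Fin.castSucc j) = (A.vecMul w) j := by
        simp only [Matrix.vecMul, dotProduct]
        exact Finset.sum_congr rfl fun i _ => by rw [hBA i j]
      rw [this, hAw]
      simp [hw', Fin.snoc_castSucc]
  exact hx.2 m hm1 hm μ ⟨isRoot_of_vecMul A μ w hw0 hAw, isRoot_of_vecMul B μ w' hw'0 hBw'⟩


theorem stmt16 (n : ℕ) (x : Matrix (Fin n) (Fin n) ℂ) (hx : EigDisjoint x)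
    (m : ℕ) (hm1 : 1 ≤ m) (hm : m + 1 ≤ n) :
    LinearIndependent ℂ (fun j : Fin m =>
      ((cutoff x (Nat.le_of_succ_le hm)) ^ (j : ℕ)).mulVec
        (fun i : Fin m => x (Fin.castLE (Nat.le_of_succ_le hm) i) ⟨m, hm⟩)) ∧
    Submodule.span ℂ (Set.range (fun j : Fin m =>
      ((cutoff x (Nat.le_of_succ_le hm)) ^ (j : ℕ)).mulVec
        (fun i : Fin m => x (Fin.castLE (Nat.le_of_succ_le hm) i) ⟨m, hm⟩))) = ⊤ := by
  have hspan := span_all n x hx m hm1 hm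
  refine ⟨?_, hspan⟩
  apply linearIndependent_of_top_le_span_of_card_eq_finrank
  · rw [hspan]
  · simp
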